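/- Let b₁, …, b_{2N} ∈ ℤ^D be the steps of an exchange drive of even length. The composite exchange permutation π_{b_{2N}} ∘ ⋯ ∘ π_{b_1} of ℤ^D × {A, B} is the identity permutation if and only if Σ_{n=1}^{2N} (−1)^{n+1} b_n = 0. -/

import Mathlib

/-- The two sublattices `A` and `B` of the two-site unit cell. -/
inductive SubSite : Type
  | A : SubSite
  | B : SubSite

/-- The exchange permutation `π_b` of `ℤ^D × {A, B}`: it maps `(r, A) ↦ (r + b, B)`
and `(r, B) ↦ (r − b, A)`, modeling the exchange of the on-site states at `(r, A)`
and `(r + b, B)`. -/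
def exch {D : ℕ} (b : Fin D → ℤ) : (Fin D → ℤ) × SubSite → (Fin D → ℤ) × SubSite
  | (r, SubSite.A) => (r + b, SubSite.B)
  | (r, SubSite.B) => (r - b, SubSite.A)

/-- The composite exchange permutation `π_{b_m} ∘ ⋯ ∘ π_{b_1}` of the first `m` steps
of an exchange drive. -/
def driveMap {D : ℕ} (b : ℕ → Fin D → ℤ) :
    ℕ → ((Fin D → ℤ) × SubSite → (Fin D → ℤ) × SubSite)
  | 0 => id
  | n + 1 => exch (b (n + 1)) ∘ driveMap b n

lemma drive_even {D : ℕ} (b : ℕ → Fin D → ℤ) (N : ℕ) (r : Fin D → ℤ) :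
    driveMap b (2 * N) (r, SubSite.A)
        = (r + ∑ n ∈ Finset.Icc 1 (2 * N), (-1 : ℤ) ^ (n + 1) • b n, SubSite.A)
    ∧ driveMap b (2 * N) (r, SubSite.B)
        = (r - ∑ n ∈ Finset.Icc 1 (2 * N), (-1 : ℤ) ^ (n + 1) • b n, SubSite.B) := by
  induction N generalizing r with
  | zero => simp [driveMap]
  | succ N ih =>
    have h2 : 2 * (N + 1) = (2 * N + 1) + 1 := by ring
    have hs : ∑ n ∈ Finset.Icc 1 (2 * N + 1 + 1), (-1 : ℤ) ^ (n + 1) • b n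
        = (∑ n ∈ Finset.Icc 1 (2 * N), (-1 : ℤ) ^ (n + 1) • b n)
          + b (2 * N + 1) - b (2 * N + 2) := by
      rw [Finset.sum_Icc_succ_top (by omega), Finset.sum_Icc_succ_top (by omega)]
      have e1 : (-1 : ℤ) ^ (2 * N + 1 + 1) = 1 := by
        rw [pow_succ, pow_succ]; simp [pow_mul]
      have e2 : (-1 : ℤ) ^ (2 * N + 1 + 1 + 1) = -1 := by
        rw [pow_succ]; rw [e1]; ring
      rw [e1, e2]
      simp [sub_eq_add_neg]
    constructor
    · rw [h2]
      show exch (b (2 * N + 1 + 1)) (exch (b (2 * N + 1)) (driveMap b (2 * N) (r, SubSite.A))) = _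
      rw [(ih r).1]
      simp only [exch]
      rw [hs]
      congr 1
      abel
    · rw [h2]
      show exch (b (2 * N + 1 + 1)) (exch (b (2 * N + 1)) (driveMap b (2 * N) (r, SubSite.B))) = _
      rw [(ih r).2]
      simp only [exch]
      rw [hs]
      congr 1
      abel

/-- For steps `b₁, …, b_{2N} ∈ ℤ^D`, the composite exchange
permutation `π_{b_{2N}} ∘ ⋯ ∘ π_{b_1}` of `ℤ^D × {A, B}` is the identity if and only if
the alternating step sum vanishes: `Σ_{n=1}^{2N} (−1)^{n+1} b_n = 0`. -/
theorem stmt_12 (D N : ℕ) (b : ℕ → Fin D → ℤ) :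
    driveMap b (2 * N) = id
      ↔ ∑ n ∈ Finset.Icc 1 (2 * N), (-1 : ℤ) ^ (n + 1) • b n = 0 := by
  constructor
  · intro h
    have := (drive_even b N 0).1
    rw [h] at this
    simpa [eq_comm] using congrArg Prod.fst this
  · intro h
    funext x
    obtain ⟨r, s⟩ := x
    cases s
    · rw [(drive_even b N r).1, h]; simp
    · rw [(drive_even b N r).2, h]; simp
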